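/- (Levi-Civita connection formula) On the probability simplex with Wasserstein metric g_W(σ,τ)=σᵀL(ρ)^†τ, the Levi-Civita connection of two constant (coordinate) vector fields σ₁,σ₂ at ρ is ∇^W_{σ₁}σ₂ = −(1/2)[L(σ₁)L(ρ)^†σ₂ + L(σ₂)L(ρ)^†σ₁] + (1/2)L(ρ)(∇_GL(ρ)^†σ₁ ∘ ∇_GL(ρ)^†σ₂); i.e., this vector satisfies the Koszul formula g_W(∇^W_{σ₁}σ₂, σ₃) = (1/2){σ₁(g_W(σ₂,σ₃)) + σ₂(g_W(σ₁,σ₃)) − σ₃(g_W(σ₁,σ₂))} for all zero-sum σ₃, where σ(f)(ρ)=d/dt|_{t=0} f(ρ+tσ). -/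

import Mathlib

open Matrix

/-- Discrete gradient matrix `D ∈ ℝ^{|E|×n}` with entries `±√ω_{ij}`. -/
noncomputable def gradMat {n : ℕ} {E : Type} (sE tE : E → Fin n) (w : E → ℝ) :
    Matrix E (Fin n) ℝ :=
  fun e k => if k = sE e then Real.sqrt (w e) else if k = tE e then -Real.sqrt (w e) else 0

/-- Weighted graph Laplacian `L(a) = Dᵀ Θ(a) D` with `Θ(a)` diagonal with entries
`(a_i + a_j)/2` on edges. -/
noncomputable def Lw {n : ℕ} {E : Type} [Fintype E] [DecidableEq E] (sE tE : E → Fin n) (w : E → ℝ)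
    (a : Fin n → ℝ) : Matrix (Fin n) (Fin n) ℝ :=
  (gradMat sE tE w)ᵀ * Matrix.diagonal (fun e => (a (sE e) + a (tE e)) / 2) * gradMat sE tE w

/-- `B` is the Moore–Penrose pseudoinverse of `A` (the four Penrose conditions). -/
def IsPInv {n : ℕ} (A B : Matrix (Fin n) (Fin n) ℝ) : Prop :=
  A * B * A = A ∧ B * A * B = B ∧ (A * B)ᵀ = A * B ∧ (B * A)ᵀ = B * A

/-- Vertex-wise circle product of the gradient fields of two potentials:
`(∇_GΦ ∘ ∇_GΨ)_i = (1/2)·Σ_{j ∈ N(i)} ω_{ij}(Φ_i − Φ_j)(Ψ_i − Ψ_j)`. -/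
noncomputable def circ {n : ℕ} {E : Type} [Fintype E] (sE tE : E → Fin n) (w : E → ℝ)
    (Φ Ψ : Fin n → ℝ) : Fin n → ℝ :=
  fun i => (1 / 2) *
    ∑ e : E, (if sE e = i ∨ tE e = i then
      w e * (Φ (sE e) - Φ (tE e)) * (Ψ (sE e) - Ψ (tE e)) else 0)

/-- The normalized all-ones vector `u₀ = (1/√n)(1,…,1)ᵀ`. -/
noncomputable def onesVec (n : ℕ) : Fin n → ℝ := fun _ => 1 / Real.sqrt n

section auxLemmas

set_option linter.unusedSectionVars false

variable {n : ℕ} {E : Type} [Fintype E] [DecidableEq E] (sE tE : E → Fin n) (w : E → ℝ)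

lemma gradMat_mulVec (Φ : Fin n → ℝ) (e : E) :
    (gradMat sE tE w *ᵥ Φ) e =
      if sE e = tE e then Real.sqrt (w e) * Φ (sE e)
      else Real.sqrt (w e) * (Φ (sE e) - Φ (tE e)) := by
  have h : ∀ k, gradMat sE tE w e k * Φ k =
      (if k = sE e then Real.sqrt (w e) * Φ k else 0) +
      (if k = tE e ∧ k ≠ sE e then -Real.sqrt (w e) * Φ k else 0) := by
    intro k
    unfold gradMat
    by_cases h1 : k = sE e <;> by_cases h2 : k = tE e <;> simp [h1, h2] <;> split_ifs <;> ring
  show (∑ k, gradMat sE tE w e k * Φ k) = _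
  simp only [h, Finset.sum_add_distrib, Finset.sum_ite_eq']
  by_cases hst : sE e = tE e
  · simp [hst, Finset.sum_ite_of_false]
  · have : ∀ k, (k = tE e ∧ k ≠ sE e) ↔ k = tE e := by
      intro k; constructor
      · exact fun h => h.1
      · exact fun h => ⟨h, by rw [h]; exact fun hc => hst hc.symm⟩
    simp only [this, Finset.sum_ite_eq', Finset.mem_univ, if_true, hst, if_false]
    ring

lemma bil_eq (a Φ Ψ : Fin n → ℝ) :
    Φ ⬝ᵥ (Lw sE tE w a *ᵥ Ψ) =
      ∑ e : E, ((a (sE e) + a (tE e)) / 2) *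
        ((gradMat sE tE w *ᵥ Φ) e * (gradMat sE tE w *ᵥ Ψ) e) := by
  unfold Lw
  rw [← Matrix.mulVec_mulVec, ← Matrix.mulVec_mulVec, Matrix.dotProduct_mulVec,
    Matrix.vecMul_transpose]
  unfold dotProduct
  refine Finset.sum_congr rfl fun e _ => ?_
  rw [Matrix.mulVec_diagonal]
  ring

lemma Lw_transpose (a : Fin n → ℝ) : (Lw sE tE w a)ᵀ = Lw sE tE w a := by
  unfold Lw
  rw [Matrix.transpose_mul, Matrix.transpose_mul, Matrix.diagonal_transpose,
    Matrix.transpose_transpose, Matrix.mul_assoc]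

lemma Lw_affine (σ : Fin n → ℝ) (t : ℝ) (ρ : Fin n → ℝ) :
    Lw sE tE w (ρ + t • σ) = Lw sE tE w ρ + t • Lw sE tE w σ := by
  unfold Lw
  have : (Matrix.diagonal (fun e => ((ρ + t • σ) (sE e) + (ρ + t • σ) (tE e)) / 2)) =
      Matrix.diagonal (fun e => (ρ (sE e) + ρ (tE e)) / 2) +
      t • Matrix.diagonal (fun e => (σ (sE e) + σ (tE e)) / 2) := by
    ext i j
    rcases eq_or_ne i j with rfl | hij
    · simp [Matrix.diagonal_apply_eq]
      ring
    · simp [Matrix.diagonal_apply_ne _ hij]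
  rw [this, Matrix.mul_add, Matrix.add_mul, Matrix.mul_smul, Matrix.smul_mul]

lemma bil_symm (a Φ Ψ : Fin n → ℝ) :
    Φ ⬝ᵥ (Lw sE tE w a *ᵥ Ψ) = Ψ ⬝ᵥ (Lw sE tE w a *ᵥ Φ) := by
  rw [bil_eq, bil_eq]; refine Finset.sum_congr rfl fun e _ => by ring

lemma circ_dot (hsl : ∀ e : E, sE e ≠ tE e) (hw : ∀ e, 0 ≤ w e) (Φ Ψ a : Fin n → ℝ) :
    circ sE tE w Φ Ψ ⬝ᵥ a = Φ ⬝ᵥ (Lw sE tE w a *ᵥ Ψ) := by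
  rw [bil_eq]
  unfold circ dotProduct
  simp only [Finset.mul_sum, Finset.sum_mul]
  rw [Finset.sum_comm]
  refine Finset.sum_congr rfl fun e _ => ?_
  have hsum : ∑ i, (if sE e = i ∨ tE e = i then
      w e * (Φ (sE e) - Φ (tE e)) * (Ψ (sE e) - Ψ (tE e)) else 0) * a i
      = (a (sE e) + a (tE e)) * (w e * (Φ (sE e) - Φ (tE e)) * (Ψ (sE e) - Ψ (tE e))) := by
    have h : ∀ i, (if sE e = i ∨ tE e = i then
        w e * (Φ (sE e) - Φ (tE e)) * (Ψ (sE e) - Ψ (tE e)) else 0) * a i =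
        (if i = sE e then w e * (Φ (sE e) - Φ (tE e)) * (Ψ (sE e) - Ψ (tE e)) * a i else 0) +
        (if i = tE e then w e * (Φ (sE e) - Φ (tE e)) * (Ψ (sE e) - Ψ (tE e)) * a i else 0) := by
      intro i
      by_cases h1 : i = sE e
      · rw [if_pos (Or.inl h1.symm), if_pos h1, if_neg (fun h2 => hsl e (h1.symm.trans h2)),
          add_zero]
      · by_cases h2 : i = tE e
        · rw [if_pos (Or.inr h2.symm), if_neg h1, if_pos h2, zero_add]
        · rw [if_neg (fun h => h.elim (fun hs => h1 hs.symm) (fun ht => h2 ht.symm)), if_neg h1,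
            if_neg h2, add_zero, zero_mul]
    simp only [h, Finset.sum_add_distrib, Finset.sum_ite_eq', Finset.mem_univ, if_true]
    ring
  have hhalf : ∑ x, (1 / 2 * if sE e = x ∨ tE e = x then
      w e * (Φ (sE e) - Φ (tE e)) * (Ψ (sE e) - Ψ (tE e)) else 0) * a x =
      (1 / 2) * ∑ x, (if sE e = x ∨ tE e = x then
      w e * (Φ (sE e) - Φ (tE e)) * (Ψ (sE e) - Ψ (tE e)) else 0) * a x := by
    rw [Finset.mul_sum]
    exact Finset.sum_congr rfl fun x _ => by ring
  rw [hhalf, hsum, gradMat_mulVec, gradMat_mulVec, if_neg (hsl e), if_neg (hsl e)]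
  have hww : Real.sqrt (w e) * Real.sqrt (w e) = w e := Real.mul_self_sqrt (hw e)
  rw [show Real.sqrt (w e) * (Φ (sE e) - Φ (tE e)) * (Real.sqrt (w e) * (Ψ (sE e) - Ψ (tE e))) =
      (Real.sqrt (w e) * Real.sqrt (w e)) * ((Φ (sE e) - Φ (tE e)) * (Ψ (sE e) - Ψ (tE e)))
      from by ring, hww]
  ring

end auxLemmas

lemma surj_on_zero_sum {n : ℕ} (hn : 0 < n) (A : Matrix (Fin n) (Fin n) ℝ)
    (hker : ∀ Φ : Fin n → ℝ, A *ᵥ Φ = 0 ↔ ∃ c : ℝ, ∀ i, Φ i = c)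
    (hrange : ∀ y : Fin n → ℝ, ∑ i, (A *ᵥ y) i = 0) :
    ∀ σ : Fin n → ℝ, ∑ i, σ i = 0 → ∃ y, A *ᵥ y = σ := by
  set f : (Fin n → ℝ) →ₗ[ℝ] (Fin n → ℝ) := Matrix.mulVecLin A with hf
  let s : (Fin n → ℝ) →ₗ[ℝ] ℝ :=
    { toFun := fun x => ∑ i, x i
      map_add' := by intro a b; simp [Finset.sum_add_distrib]
      map_smul' := by intro c a; simp [Finset.mul_sum] }
  have hkerf : LinearMap.ker f = Submodule.span ℝ {(fun _ => (1:ℝ) : Fin n → ℝ)} := by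
    ext Φ
    rw [LinearMap.mem_ker, Submodule.mem_span_singleton]
    constructor
    · intro h
      obtain ⟨c, hc⟩ := (hker Φ).1 h
      exact ⟨c, by funext i; simp [hc i]⟩
    · rintro ⟨c, rfl⟩
      exact (hker _).2 ⟨c, fun i => by simp⟩
  have hone : (fun _ => (1:ℝ) : Fin n → ℝ) ≠ 0 := by
    intro h
    have := congrFun h ⟨0, hn⟩
    simp at this
  have hkdim : Module.finrank ℝ (LinearMap.ker f) = 1 := by
    rw [hkerf]; exact finrank_span_singleton hone
  have hrn := LinearMap.finrank_range_add_finrank_ker f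
  have hdim : Module.finrank ℝ (Fin n → ℝ) = n := by simp
  have hssurj : LinearMap.range s = ⊤ := by
    rw [LinearMap.range_eq_top]
    intro r
    refine ⟨fun _ => r / n, ?_⟩
    show (∑ _i : Fin n, r / n) = r
    rw [Finset.sum_const, Finset.card_univ, Fintype.card_fin, nsmul_eq_mul]
    field_simp
  have hrnS := LinearMap.finrank_range_add_finrank_ker s
  rw [hssurj] at hrnS
  have hsker : Module.finrank ℝ (LinearMap.ker s) = n - 1 := by
    have h1 : Module.finrank ℝ (⊤ : Submodule ℝ ℝ) = 1 := by simp
    rw [h1, hdim] at hrnS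
    omega
  have hrangef : LinearMap.range f = LinearMap.ker s := by
    apply Submodule.eq_of_le_of_finrank_eq
    · rintro x ⟨y, rfl⟩
      exact hrange y
    · rw [hsker]
      rw [hdim, hkdim] at hrn
      omega
  intro σ hσ
  have hmem : σ ∈ LinearMap.range f := by
    rw [hrangef]
    exact hσ
  obtain ⟨y, hy⟩ := hmem
  exact ⟨y, hy⟩

attribute [local instance] Matrix.linftyOpNormedRing Matrix.linftyOpNormedAlgebra
  Matrix.linftyOpNormedSpace

lemma deriv_inv_bil {n : ℕ} (M₀ L : Matrix (Fin n) (Fin n) ℝ)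
    (G : ℝ → Matrix (Fin n) (Fin n) ℝ) (ε : ℝ) (hε : 0 < ε)
    (hG : ∀ t : ℝ, |t| < ε → G t * (M₀ + t • L) = 1 ∧ (M₀ + t • L) * G t = 1)
    (v u : Fin n → ℝ) :
    deriv (fun t => v ⬝ᵥ (G t *ᵥ u)) 0 = -(v ⬝ᵥ ((G 0 * L * G 0) *ᵥ u)) := by
  have h0 := hG 0 (by simpa using hε)
  have e0 : M₀ + (0:ℝ) • L = M₀ := by simp
  rw [e0] at h0
  set x : (Matrix (Fin n) (Fin n) ℝ)ˣ := ⟨M₀, G 0, h0.2, h0.1⟩ with hx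
  have hφ : HasDerivAt (fun t : ℝ => M₀ + t • L) L 0 := by
    convert ((hasDerivAt_id (0:ℝ)).smul_const L).const_add M₀ using 1
    case e'_4 => rfl
    case e'_5 => rfl
    case e'_6 => rfl
    case e'_8 => rfl
    case e'_9 => simp
  have hinv : HasDerivAt (fun t : ℝ => Ring.inverse (M₀ + t • L))
      (-(G 0 * L * G 0)) 0 := by
    have hlift : HasFDerivAt Ring.inverse
        (-(ContinuousLinearMap.mulLeftRight ℝ (Matrix (Fin n) (Fin n) ℝ) ↑x⁻¹ ↑x⁻¹))
        ((fun t : ℝ => M₀ + t • L) 0) := by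
      have := hasFDerivAt_ringInverse (𝕜 := ℝ) x
      simpa [e0] using this
    have hxv : (↑x⁻¹ : Matrix (Fin n) (Fin n) ℝ) = G 0 := rfl
    convert hlift.comp_hasDerivAt 0 hφ using 1
    case e'_4 => rfl
    case e'_5 => rfl
    case e'_6 => rfl
    case e'_8 => rfl
    case e'_9 => simp [hxv]
  let ℓ : Matrix (Fin n) (Fin n) ℝ →ₗ[ℝ] ℝ :=
    { toFun := fun B => v ⬝ᵥ (B *ᵥ u)
      map_add' := by intro A B; simp [Matrix.add_mulVec, dotProduct_add]
      map_smul' := by intro c A; simp [Matrix.smul_mulVec, dotProduct_smul] }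
  have hcomp : HasDerivAt (fun t : ℝ => v ⬝ᵥ (Ring.inverse (M₀ + t • L) *ᵥ u))
      (-(v ⬝ᵥ ((G 0 * L * G 0) *ᵥ u))) 0 := by
    have := (ℓ.toContinuousLinearMap.hasFDerivAt
      (x := Ring.inverse (M₀ + (0:ℝ) • L))).comp_hasDerivAt 0 hinv
    exact this.congr_deriv (by
      change v ⬝ᵥ ((-(G 0 * L * G 0)) *ᵥ u) = _
      simp [Matrix.neg_mulVec, dotProduct_neg])
  have hev : (fun t => v ⬝ᵥ (G t *ᵥ u)) =ᶠ[nhds (0:ℝ)]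
      (fun t : ℝ => v ⬝ᵥ (Ring.inverse (M₀ + t • L) *ᵥ u)) := by
    have habs : ∀ᶠ t in nhds (0:ℝ), |t| < ε := by
      have := eventually_abs_sub_lt (0:ℝ) hε
      simpa using this
    filter_upwards [habs] with t ht
    have h := hG t ht
    have : Ring.inverse (M₀ + t • L) = G t := by
      set y : (Matrix (Fin n) (Fin n) ℝ)ˣ := ⟨M₀ + t • L, G t, h.2, h.1⟩ with hy
      have : Ring.inverse (y : Matrix (Fin n) (Fin n) ℝ) = ↑y⁻¹ := Ring.inverse_unit y
      simpa [hy] using this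
    rw [this]
  exact ((hcomp.congr_of_eventuallyEq hev).deriv)

theorem levi_civita_koszul
    {n : ℕ} {E : Type} [Fintype E] [DecidableEq E]
    (sE tE : E → Fin n) (w : E → ℝ)
    (hw : ∀ e, 0 < w e)
    (hconn : ∀ Φ : Fin n → ℝ, (∀ e, Φ (sE e) = Φ (tE e)) → ∀ i j, Φ i = Φ j)
    (ρ : Fin n → ℝ) (hρ : ∀ i, 0 < ρ i) (hsum : ∑ i, ρ i = 1)
    (Ldag : Matrix (Fin n) (Fin n) ℝ) (hpinv : IsPInv (Lw sE tE w ρ) Ldag)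
    (hker : ∀ Φ : Fin n → ℝ, Lw sE tE w ρ *ᵥ Φ = 0 ↔ ∃ c : ℝ, ∀ i, Φ i = c)
    (Gdir : (Fin n → ℝ) → ℝ → Matrix (Fin n) (Fin n) ℝ)
    (hGdir : ∀ σ : Fin n → ℝ, ∃ ε > (0:ℝ), ∀ t : ℝ, |t| < ε →
      Gdir σ t * (Lw sE tE w (ρ + t • σ) + vecMulVec (onesVec n) (onesVec n)) = 1 ∧
      (Lw sE tE w (ρ + t • σ) + vecMulVec (onesVec n) (onesVec n)) * Gdir σ t = 1)
    (σ₁ σ₂ σ₃ : Fin n → ℝ)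
    (h1 : ∑ i, σ₁ i = 0) (h2 : ∑ i, σ₂ i = 0) (h3 : ∑ i, σ₃ i = 0) :
    (-(1/2 : ℝ) • (Lw sE tE w σ₁ *ᵥ (Ldag *ᵥ σ₂) + Lw sE tE w σ₂ *ᵥ (Ldag *ᵥ σ₁)) +
        (1/2 : ℝ) • (Lw sE tE w ρ *ᵥ circ sE tE w (Ldag *ᵥ σ₁) (Ldag *ᵥ σ₂)))
      ⬝ᵥ (Ldag *ᵥ σ₃) =
    (1/2 : ℝ) * (deriv (fun t => σ₂ ⬝ᵥ (Gdir σ₁ t *ᵥ σ₃)) 0 +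
      deriv (fun t => σ₁ ⬝ᵥ (Gdir σ₂ t *ᵥ σ₃)) 0 -
      deriv (fun t => σ₁ ⬝ᵥ (Gdir σ₃ t *ᵥ σ₂)) 0) := by
  classical
  obtain ⟨hp1, hp2, hp3, hp4⟩ := hpinv
  set Lρ := Lw sE tE w ρ with hLρ
  -- n is positive
  have hn : 0 < n := by
    rcases Nat.eq_zero_or_pos n with h | h
    · exfalso
      subst h
      simp at hsum
    · exact h
  -- kernel contains constants
  have hK1 : Lρ *ᵥ (fun _ => (1:ℝ)) = 0 := (hker _).2 ⟨1, fun _ => rfl⟩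
  -- no self-loops
  have hsl : ∀ e : E, sE e ≠ tE e := by
    intro e0 he0
    have h10 : (fun _ => (1:ℝ)) ⬝ᵥ (Lρ *ᵥ (fun _ => (1:ℝ))) = 0 := by
      rw [hK1]; simp
    rw [hLρ, bil_eq] at h10
    have hterm : ∀ e : E, 0 ≤ ((ρ (sE e) + ρ (tE e)) / 2) *
        ((gradMat sE tE w *ᵥ (fun _ => (1:ℝ))) e * (gradMat sE tE w *ᵥ (fun _ => (1:ℝ))) e) := by
      intro e
      apply mul_nonneg
      · have := hρ (sE e); have := hρ (tE e); linarith
      · exact mul_self_nonneg _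
    have hz := (Finset.sum_eq_zero_iff_of_nonneg (fun e _ => hterm e)).1 h10 e0
      (Finset.mem_univ _)
    rw [gradMat_mulVec, if_pos he0] at hz
    have hsq : 0 < Real.sqrt (w e0) := Real.sqrt_pos.2 (hw e0)
    have hρs := hρ (sE e0); have hρt := hρ (tE e0)
    have hpos : 0 < (ρ (sE e0) + ρ (tE e0)) / 2 *
        (Real.sqrt (w e0) * 1 * (Real.sqrt (w e0) * 1)) := by
      have hq : 0 < Real.sqrt (w e0) * 1 * (Real.sqrt (w e0) * 1) := by nlinarith
      exact mul_pos (by linarith) hq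
    linarith
  -- range condition for surjectivity
  have hrange0 : ∀ y : Fin n → ℝ, ∑ i, (Lρ *ᵥ y) i = 0 := by
    intro y
    have : (fun _ => (1:ℝ)) ⬝ᵥ (Lρ *ᵥ y) = ∑ i, (Lρ *ᵥ y) i := by
      unfold dotProduct; simp
    rw [← this, hLρ, bil_eq]
    apply Finset.sum_eq_zero
    intro e _
    rw [gradMat_mulVec, if_neg (hsl e)]
    simp
  have hsurj := surj_on_zero_sum hn Lρ hker hrange0
  -- Ldag preserves zero-sum
  have hLdagSum : ∀ σ : Fin n → ℝ, ∑ i, σ i = 0 → ∑ i, (Ldag *ᵥ σ) i = 0 := by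
    intro σ hσ
    obtain ⟨y, hy⟩ := hsurj σ hσ
    rw [← hy, Matrix.mulVec_mulVec]
    have hv1 : (fun _ => (1:ℝ)) ᵥ* (Ldag * Lρ) = 0 := by
      have : (fun _ => (1:ℝ)) ᵥ* (Ldag * Lρ) = (Ldag * Lρ)ᵀ *ᵥ (fun _ => (1:ℝ)) := by
        rw [← Matrix.vecMul_transpose, Matrix.transpose_transpose]
      rw [this, hp4, ← Matrix.mulVec_mulVec, hK1, Matrix.mulVec_zero]
    have : (fun _ => (1:ℝ)) ⬝ᵥ ((Ldag * Lρ) *ᵥ y) = ∑ i, ((Ldag * Lρ) *ᵥ y) i := by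
      unfold dotProduct; simp
    rw [← this, Matrix.dotProduct_mulVec, hv1, zero_dotProduct]
  -- Lρ Ldag fixes zero-sum vectors
  have hfix : ∀ σ : Fin n → ℝ, ∑ i, σ i = 0 → Lρ *ᵥ (Ldag *ᵥ σ) = σ := by
    intro σ hσ
    obtain ⟨y, hy⟩ := hsurj σ hσ
    rw [← hy, Matrix.mulVec_mulVec, Matrix.mulVec_mulVec, hp1]
  -- M₀ = Lρ + u₀u₀ᵀ fixes Ldag σ for zero-sum σ
  set u : Fin n → ℝ := onesVec n with hu
  set M₀ : Matrix (Fin n) (Fin n) ℝ := Lρ + vecMulVec u u with hM₀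
  have hM0fix : ∀ σ : Fin n → ℝ, ∑ i, σ i = 0 → M₀ *ᵥ (Ldag *ᵥ σ) = σ := by
    intro σ hσ
    rw [hM₀, Matrix.add_mulVec, hfix σ hσ]
    have : vecMulVec u u *ᵥ (Ldag *ᵥ σ) = 0 := by
      funext i
      show (∑ j, vecMulVec u u i j * (Ldag *ᵥ σ) j) = 0
      have : ∀ j, vecMulVec u u i j * (Ldag *ᵥ σ) j = u i * (u j * (Ldag *ᵥ σ) j) := by
        intro j; rw [Matrix.vecMulVec_apply]; ring
      simp only [this, ← Finset.mul_sum]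
      have : ∑ j, u j * (Ldag *ᵥ σ) j = (1 / Real.sqrt n) * ∑ j, (Ldag *ᵥ σ) j := by
        rw [Finset.mul_sum]
        exact Finset.sum_congr rfl fun j _ => rfl
      rw [this, hLdagSum σ hσ, mul_zero, mul_zero]
    rw [this]
    simp
  -- symmetry of M₀
  have hM0symm : M₀ᵀ = M₀ := by
    have hv2 : (vecMulVec u u)ᵀ = vecMulVec u u := by
      ext i j
      rw [Matrix.transpose_apply, Matrix.vecMulVec_apply, Matrix.vecMulVec_apply, mul_comm]
    rw [hM₀, Matrix.transpose_add, hLρ, Lw_transpose, hv2]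
  -- facts about Gdir σ 0 for each σ
  have hG0 : ∀ σa : Fin n → ℝ, ∃ εa > (0:ℝ),
      (∀ t : ℝ, |t| < εa → Gdir σa t * (M₀ + t • Lw sE tE w σa) = 1 ∧
        (M₀ + t • Lw sE tE w σa) * Gdir σa t = 1) := by
    intro σa
    obtain ⟨ε, hε, hspec⟩ := hGdir σa
    refine ⟨ε, hε, fun t ht => ?_⟩
    have := hspec t ht
    rw [Lw_affine] at this
    have harr : Lρ + t • Lw sE tE w σa + vecMulVec u u = M₀ + t • Lw sE tE w σa := by
      rw [hM₀, add_right_comm]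
    rw [← hLρ, harr] at this
    exact this
  -- derivative computation for each triple
  have hderiv : ∀ σa σb σc : Fin n → ℝ, (∑ i, σb i = 0) → (∑ i, σc i = 0) →
      deriv (fun t => σb ⬝ᵥ (Gdir σa t *ᵥ σc)) 0 =
        -((Ldag *ᵥ σb) ⬝ᵥ (Lw sE tE w σa *ᵥ (Ldag *ᵥ σc))) := by
    intro σa σb σc hb hc
    obtain ⟨εa, hεa, hspec⟩ := hG0 σa
    rw [deriv_inv_bil M₀ (Lw sE tE w σa) (Gdir σa) εa hεa hspec σb σc]
    set G0 := Gdir σa 0 with hG0def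
    have h0 := hspec 0 (by simpa using hεa)
    rw [show M₀ + (0:ℝ) • Lw sE tE w σa = M₀ by simp] at h0
    have hG0v : ∀ σ : Fin n → ℝ, ∑ i, σ i = 0 → G0 *ᵥ σ = Ldag *ᵥ σ := by
      intro σ hσ
      rw [← hM0fix σ hσ, Matrix.mulVec_mulVec, h0.1, Matrix.one_mulVec, hM0fix σ hσ]
    have hG0symm : G0ᵀ = G0 := by
      have e1 : G0ᵀ * M₀ = 1 := by
        rw [← hM0symm, ← Matrix.transpose_mul, h0.2, Matrix.transpose_one]
      calc G0ᵀ = G0ᵀ * (M₀ * G0) := by rw [h0.2, mul_one]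
        _ = (G0ᵀ * M₀) * G0 := by rw [Matrix.mul_assoc]
        _ = G0 := by rw [e1, one_mul]
    rw [← Matrix.mulVec_mulVec, ← Matrix.mulVec_mulVec, Matrix.dotProduct_mulVec]
    rw [show σb ᵥ* G0 = G0 *ᵥ σb from by rw [← hG0symm, Matrix.vecMul_transpose, hG0symm]]
    rw [hG0v σb hb, hG0v σc hc]
  -- final algebra
  rw [hderiv σ₁ σ₂ σ₃ h2 h3, hderiv σ₂ σ₁ σ₃ h1 h3, hderiv σ₃ σ₁ σ₂ h1 h2]
  have e1 : (Lw sE tE w σ₁ *ᵥ (Ldag *ᵥ σ₂)) ⬝ᵥ (Ldag *ᵥ σ₃)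
      = (Ldag *ᵥ σ₂) ⬝ᵥ (Lw sE tE w σ₁ *ᵥ (Ldag *ᵥ σ₃)) := by
    rw [dotProduct_comm, bil_symm]
  have e2 : (Lw sE tE w σ₂ *ᵥ (Ldag *ᵥ σ₁)) ⬝ᵥ (Ldag *ᵥ σ₃)
      = (Ldag *ᵥ σ₁) ⬝ᵥ (Lw sE tE w σ₂ *ᵥ (Ldag *ᵥ σ₃)) := by
    rw [dotProduct_comm, bil_symm]
  have e3 : (Lρ *ᵥ circ sE tE w (Ldag *ᵥ σ₁) (Ldag *ᵥ σ₂)) ⬝ᵥ (Ldag *ᵥ σ₃)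
      = (Ldag *ᵥ σ₁) ⬝ᵥ (Lw sE tE w σ₃ *ᵥ (Ldag *ᵥ σ₂)) := by
    rw [dotProduct_comm, hLρ, bil_symm, ← hLρ, hfix σ₃ h3,
      circ_dot sE tE w hsl (fun e => (hw e).le)]
  rw [add_dotProduct, smul_dotProduct, smul_dotProduct,
    add_dotProduct, e1, e2, e3]
  simp only [smul_eq_mul]
  ring
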